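/- The discrete probability mass function of a sum of independent integer-valued random variables each uniform on a set of consecutive integers is log-concave: if p(t) = Pr[U = t], then p(t)² ≥ p(t−1)·p(t+1) for all integers t. -/

import Mathlib

/-- The probability mass function of the sum of `k` independent random variables,
the `i`-th uniform on the integer interval `{a i, …, b i}`. -/
noncomputable def sumPMF (k : ℕ) (a b : Fin k → ℤ) (s : ℤ) : ℝ :=
  (((Fintype.piFinset fun i => Finset.Icc (a i) (b i)).filter
      (fun u => ∑ i, u i = s)).card : ℝ) /
    ∏ i, ((Finset.Icc (a i) (b i)).card : ℝ)

/-- Discrete log-concavity (PF₂ form) for nonnegative functions on `ℤ`. -/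
def IsLC (f : ℤ → ℝ) : Prop :=
  (∀ s, 0 ≤ f s) ∧ ∀ x y : ℤ, x ≤ y → f (x - 1) * f (y + 1) ≤ f x * f y

lemma lc_slide {g : ℤ → ℝ} (hg : IsLC g) (d : ℕ) :
    ∀ p q : ℤ, p ≤ q → g p * g (q + d) ≤ g (p + d) * g q := by
  induction d with
  | zero => intro p q _; simp [mul_comm]
  | succ d ih =>
    intro p q hpq
    rcases eq_or_lt_of_le hpq with rfl | h
    · exact le_of_eq (mul_comm _ _)
    · have h1 := hg.2 (p + 1) (q + (d : ℤ)) (by omega)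
      have h2 := ih (p + 1) q (by omega)
      have e1 : p + 1 - 1 = p := by ring
      have e2 : q + (d : ℤ) + 1 = q + ((d : ℕ) + 1 : ℕ) := by push_cast; ring
      have e3 : p + 1 + (d : ℤ) = p + ((d : ℕ) + 1 : ℕ) := by push_cast; ring
      rw [e1, e2] at h1
      rw [e3] at h2
      exact le_trans h1 h2

/-- Convolution with an interval-supported log-concave function preserves
log-concavity. -/
lemma conv_lc (f g : ℤ → ℝ) (hf : IsLC f) (hg : IsLC g) (A B : ℤ)
    (hsupp : ∀ i : ℤ, i ∉ Finset.Icc A B → f i = 0) :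
    IsLC (fun s => ∑ i ∈ Finset.Icc (A - 1) (B + 1), f i * g (s - i)) := by
  set S := Finset.Icc (A - 1) (B + 1) with hS
  have hmemS : ∀ i : ℤ, i ∈ S ↔ A - 1 ≤ i ∧ i ≤ B + 1 := by
    intro i; rw [hS, Finset.mem_Icc]
  have hf0 : ∀ i : ℤ, i < A ∨ B < i → f i = 0 := by
    intro i hi; exact hsupp i (by rw [Finset.mem_Icc]; omega)
  -- key shift identity
  have key : ∀ s : ℤ, ∑ i ∈ S, f i * g (s - 1 - i) = ∑ i ∈ S, f (i - 1) * g (s - i) := by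
    intro s
    have h1 : ∑ i ∈ S, f i * g (s - 1 - i)
        = ∑ i ∈ Finset.Icc (A - 2) (B + 2), f i * g (s - 1 - i) := by
      apply Finset.sum_subset
      · intro x hx
        rw [hmemS] at hx; rw [Finset.mem_Icc]; omega
      · intro x hx hx'
        rw [Finset.mem_Icc] at hx
        rw [hmemS] at hx'
        rw [hf0 x (by omega), zero_mul]
    have h2 : ∑ i ∈ Finset.Icc (A - 2) (B + 2), f i * g (s - 1 - i)
        = ∑ j ∈ Finset.Icc (A - 1) (B + 3), f (j - 1) * g (s - j) := by
      apply Finset.sum_nbij' (i := fun i => i + 1) (j := fun j => j - 1)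
      · intro x hx; rw [Finset.mem_Icc] at *; omega
      · intro x hx; rw [Finset.mem_Icc] at *; omega
      · intro x _; ring
      · intro x _; ring
      · intro x _
        have e1 : x + 1 - 1 = x := by ring
        have e2 : s - (x + 1) = s - 1 - x := by ring
        rw [e1, e2]
    have h3 : ∑ j ∈ Finset.Icc (A - 1) (B + 3), f (j - 1) * g (s - j)
        = ∑ j ∈ S, f (j - 1) * g (s - j) := by
      symm
      apply Finset.sum_subset
      · intro x hx
        rw [hmemS] at hx; rw [Finset.mem_Icc]; omega
      · intro x hx hx'
        rw [Finset.mem_Icc] at hx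
        rw [hmemS] at hx'
        rw [hf0 (x - 1) (by omega), zero_mul]
    rw [h1, h2, h3]
  constructor
  · intro s
    apply Finset.sum_nonneg
    intro i _
    exact mul_nonneg (hf.1 i) (hg.1 _)
  intro x y hxy
  simp only
  have hx1 : ∑ i ∈ S, f i * g (x - 1 - i) = ∑ i ∈ S, f (i - 1) * g (x - i) := key x
  have hy : ∑ j ∈ S, f j * g (y - j) = ∑ j ∈ S, f (j - 1) * g (y + 1 - j) := by
    have := key (y + 1)
    have e : ∀ j : ℤ, y + 1 - 1 - j = y - j := fun j => by ring
    simpa only [e] using this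
  rw [hx1, hy]
  -- expand products
  rw [Finset.sum_mul_sum, Finset.sum_mul_sum]
  rw [← sub_nonneg, ← Finset.sum_sub_distrib]
  have expand : ∀ i : ℤ,
      ((∑ j ∈ S, f i * g (x - i) * (f (j - 1) * g (y + 1 - j))) -
        ∑ j ∈ S, f (i - 1) * g (x - i) * (f j * g (y + 1 - j)))
      = ∑ j ∈ S, (f i * f (j - 1) - f (i - 1) * f j) * (g (x - i) * g (y + 1 - j)) := by
    intro i
    rw [← Finset.sum_sub_distrib]
    refine Finset.sum_congr rfl fun j _ => by ring
  simp only [expand]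
  -- now show the double sum is nonnegative by antisymmetrization
  set c : ℤ → ℤ → ℝ := fun i j => f i * f (j - 1) - f (i - 1) * f j with hc
  set w : ℤ → ℤ → ℝ := fun i j => g (x - i) * g (y + 1 - j) with hw
  have main : ∀ i j : ℤ, i ≤ j → 0 ≤ c i j * (w i j - w j i) := by
    intro i j hij
    apply mul_nonneg
    · rcases eq_or_lt_of_le hij with rfl | h
      · rw [hc]; simp only; rw [mul_comm, sub_self]
      · rw [hc]; simp only [sub_nonneg]
        have := hf.2 i (j - 1) (by omega)
        have e : j - 1 + 1 = j := by ring
        rw [e] at this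
        exact this
    · rw [hw]; simp only [sub_nonneg]
      have hd := lc_slide hg (j - i).toNat (x - j) (y + 1 - j) (by omega)
      have e : (((j - i).toNat : ℤ)) = j - i := Int.toNat_of_nonneg (by omega)
      rw [e] at hd
      have e1 : y + 1 - j + (j - i) = y + 1 - i := by ring
      have e2 : x - j + (j - i) = x - i := by ring
      rw [e1, e2] at hd
      exact hd
  have term : ∀ i j : ℤ, 0 ≤ c i j * w i j + c j i * w j i := by
    intro i j
    rcases le_total i j with h | h
    · have h0 := main i j h
      have hcs : c j i = - c i j := by rw [hc]; simp only; ring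
      rw [hcs]
      nlinarith [h0]
    · have h0 := main j i h
      have hcs : c i j = - c j i := by rw [hc]; simp only; ring
      rw [hcs]
      nlinarith [h0]
  have twice : (∑ i ∈ S, ∑ j ∈ S, c i j * w i j) * 2
      = ∑ i ∈ S, ∑ j ∈ S, (c i j * w i j + c j i * w j i) := by
    have hcomm : ∑ i ∈ S, ∑ j ∈ S, c i j * w i j
        = ∑ i ∈ S, ∑ j ∈ S, c j i * w j i := Finset.sum_comm
    rw [mul_two]
    nth_rewrite 2 [hcomm]
    rw [← Finset.sum_add_distrib]
    refine Finset.sum_congr rfl fun i _ => ?_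
    rw [← Finset.sum_add_distrib]
  have hpos : 0 ≤ ∑ i ∈ S, ∑ j ∈ S, (c i j * w i j + c j i * w j i) :=
    Finset.sum_nonneg fun i _ => Finset.sum_nonneg fun j _ => term i j
  nlinarith [twice, hpos]

/-- The (real-valued) number of lattice points of the box summing to `s`. -/
noncomputable def cnt (k : ℕ) (a b : Fin k → ℤ) (s : ℤ) : ℝ :=
  (((Fintype.piFinset fun i => Finset.Icc (a i) (b i)).filter
      (fun u => ∑ i, u i = s)).card : ℝ)

lemma cnt_zero_of (k : ℕ) (a b : Fin k → ℤ) (s : ℤ)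
    (hs : s < ∑ i, a i ∨ ∑ i, b i < s) : cnt k a b s = 0 := by
  unfold cnt
  norm_cast
  rw [Finset.card_eq_zero, Finset.filter_eq_empty_iff]
  intro u hu
  rw [Fintype.mem_piFinset] at hu
  intro hsum
  have h1 : ∑ i, a i ≤ ∑ i, u i :=
    Finset.sum_le_sum fun i _ => (Finset.mem_Icc.1 (hu i)).1
  have h2 : ∑ i, u i ≤ ∑ i, b i :=
    Finset.sum_le_sum fun i _ => (Finset.mem_Icc.1 (hu i)).2
  omega

lemma cnt_succ (k : ℕ) (a b : Fin (k + 1) → ℤ) (s : ℤ) :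
    cnt (k + 1) a b s = ∑ v ∈ Finset.Icc (a 0) (b 0),
      cnt k (fun i => a i.succ) (fun i => b i.succ) (s - v) := by
  unfold cnt
  rw [← Nat.cast_sum]
  congr 1
  rw [Finset.card_eq_sum_card_fiberwise (f := fun u => u 0)
    (t := Finset.Icc (a 0) (b 0))
    (fun u hu => by
      rw [Finset.mem_coe, Finset.mem_filter, Fintype.mem_piFinset] at hu
      exact hu.1 0)]
  refine Finset.sum_congr rfl fun v hv => ?_
  apply Finset.card_nbij' (i := fun u => Fin.tail u) (j := fun w => Fin.cons v w)
  · intro u hu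
    simp only [Finset.mem_coe, Finset.mem_filter, Fintype.mem_piFinset] at hu ⊢
    obtain ⟨⟨hmem, hsum⟩, h0⟩ := hu
    refine ⟨fun i => hmem i.succ, ?_⟩
    rw [Fin.sum_univ_succ] at hsum
    unfold Fin.tail
    omega
  · intro w hw
    simp only [Finset.mem_coe, Finset.mem_filter, Fintype.mem_piFinset] at hw ⊢
    obtain ⟨hmem, hsum⟩ := hw
    refine ⟨⟨fun i => ?_, ?_⟩, ?_⟩
    · rcases Fin.eq_zero_or_eq_succ i with rfl | ⟨j, rfl⟩
      · simpa using hv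
      · simpa using hmem j
    · rw [Fin.sum_univ_succ]
      simp only [Fin.cons_zero, Fin.cons_succ]
      omega
    · simp
  · intro u hu
    rw [Finset.mem_coe, Finset.mem_filter] at hu
    rw [← hu.2]
    exact Fin.cons_self_tail u
  · intro w _
    simp

lemma cnt_zero_lc (a b : Fin 0 → ℤ) : IsLC (cnt 0 a b) := by
  have hval : ∀ s : ℤ, cnt 0 a b s = if s = 0 then 1 else 0 := by
    intro s
    unfold cnt
    rcases eq_or_ne s 0 with rfl | hs
    · simp
    · simp [hs, Ne.symm hs]
  constructor
  · intro s; rw [hval]; split <;> norm_num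
  · intro x y hxy
    rw [hval, hval, hval, hval]
    split_ifs <;> norm_num <;> omega

/-- interval indicator -/
noncomputable def ind (c d : ℤ) : ℤ → ℝ := fun v => if v ∈ Finset.Icc c d then 1 else 0

lemma ind_lc (c d : ℤ) : IsLC (ind c d) := by
  constructor
  · intro s; unfold ind; split <;> norm_num
  · intro x y hxy
    unfold ind
    simp only [Finset.mem_Icc]
    split_ifs <;> norm_num <;> omega

lemma cnt_lc (k : ℕ) (a b : Fin k → ℤ) : IsLC (cnt k a b) := by
  induction k with
  | zero => exact cnt_zero_lc a b
  | succ k ih =>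
    set a' : Fin k → ℤ := fun i => a i.succ with ha'
    set b' : Fin k → ℤ := fun i => b i.succ with hb'
    set A : ℤ := ∑ i, a' i with hA
    set B : ℤ := ∑ i, b' i with hB
    have hsupp : ∀ i : ℤ, i ∉ Finset.Icc A B → cnt k a' b' i = 0 := by
      intro i hi
      rw [Finset.mem_Icc] at hi
      exact cnt_zero_of k a' b' i (by omega)
    have hconv := conv_lc (cnt k a' b') (ind (a 0) (b 0)) (ih a' b') (ind_lc _ _) A B hsupp
    have heq : cnt (k + 1) a b = fun s =>
        ∑ i ∈ Finset.Icc (A - 1) (B + 1), cnt k a' b' i * ind (a 0) (b 0) (s - i) := by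
      funext s
      rw [cnt_succ]
      -- reindex v ↦ s - v
      have step1 : ∑ v ∈ Finset.Icc (a 0) (b 0), cnt k a' b' (s - v)
          = ∑ i ∈ Finset.Icc (s - b 0) (s - a 0), cnt k a' b' i := by
        apply Finset.sum_nbij' (i := fun v => s - v) (j := fun i => s - i)
        · intro v hvv; rw [Finset.mem_Icc] at *; omega
        · intro v hvv; rw [Finset.mem_Icc] at *; omega
        · intro v _; ring
        · intro v _; ring
        · intro v _; rfl
      have step2 : ∑ i ∈ Finset.Icc (s - b 0) (s - a 0), cnt k a' b' i
          = ∑ i ∈ Finset.Icc (s - b 0) (s - a 0), cnt k a' b' i * ind (a 0) (b 0) (s - i) := by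
        refine Finset.sum_congr rfl fun i hi => ?_
        rw [Finset.mem_Icc] at hi
        unfold ind
        rw [if_pos (Finset.mem_Icc.2 (by omega)), mul_one]
      set T := Finset.Icc (min (A - 1) (s - b 0)) (max (B + 1) (s - a 0)) with hT
      have step3 : ∑ i ∈ Finset.Icc (s - b 0) (s - a 0), cnt k a' b' i * ind (a 0) (b 0) (s - i)
          = ∑ i ∈ T, cnt k a' b' i * ind (a 0) (b 0) (s - i) := by
        apply Finset.sum_subset
        · intro i hi; rw [Finset.mem_Icc] at hi; rw [hT, Finset.mem_Icc]; omega
        · intro i _ hi'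
          rw [Finset.mem_Icc] at hi'
          unfold ind
          rw [if_neg (by rw [Finset.mem_Icc]; omega), mul_zero]
      have step4 : ∑ i ∈ Finset.Icc (A - 1) (B + 1), cnt k a' b' i * ind (a 0) (b 0) (s - i)
          = ∑ i ∈ T, cnt k a' b' i * ind (a 0) (b 0) (s - i) := by
        apply Finset.sum_subset
        · intro i hi; rw [Finset.mem_Icc] at hi; rw [hT, Finset.mem_Icc]; omega
        · intro i _ hi'
          rw [Finset.mem_Icc] at hi'
          rw [hsupp i (by rw [Finset.mem_Icc]; omega), zero_mul]
      rw [step1, step2, step3, ← step4]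
    rw [heq]
    exact hconv

/-- The pmf of a sum of independent random variables, each uniform on a set of
consecutive integers, is log-concave: `p(t)² ≥ p(t-1)·p(t+1)` for all `t`. -/
theorem stmt8 (k : ℕ) (hk : 0 < k) (a b : Fin k → ℤ) (hab : ∀ i, a i ≤ b i) (t : ℤ) :
    sumPMF k a b (t - 1) * sumPMF k a b (t + 1) ≤ (sumPMF k a b t) ^ 2 := by
  have hlc := cnt_lc k a b
  have key := hlc.2 t t le_rfl
  have hC : 0 < ∏ i, ((Finset.Icc (a i) (b i)).card : ℝ) := by
    apply Finset.prod_pos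
    intro i _
    have hne : (Finset.Icc (a i) (b i)).Nonempty := Finset.nonempty_Icc.2 (hab i)
    exact_mod_cast Finset.card_pos.2 hne
  have hdef : ∀ s : ℤ, sumPMF k a b s = cnt k a b s / ∏ i, ((Finset.Icc (a i) (b i)).card : ℝ) := by
    intro s; rfl
  rw [hdef, hdef, hdef, div_mul_div_comm, div_pow, ← sq (∏ i, ((Finset.Icc (a i) (b i)).card : ℝ))]
  apply div_le_div_of_nonneg_right ?_ (by positivity)
  · rw [sq]
    exact key
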